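/- At a null point (n2 = 0, hence l(n) = 1, h(n,·) = 0) with m = dim V > 1, assume the background junction conditions for null points hold: n^a[Y]_{ab} = 0 and P^{ab}[Y]_{ab} = 0. Then the linearized shell δτ^{ab} (as in the previous statement, with n2 = 0 substituted in the background terms) vanishes if and only if: (1) δn^b[Y]_{ab} + n^b[δY]_{ab} = 0, (2) δP^{ab}[Y]_{ab} + P^{ab}[δY]_{ab} = 0, and (3) δn2·P^{ac}[Y]_{bc} = 0. -/
import Mathlib

private lemma swap_mul_sum {m : ℕ} (v : Fin m → ℝ) (f : Fin m → Fin m → ℝ) :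
    (∑ a, v a * (∑ c, f a c)) = ∑ c, ∑ a, v a * f a c := by
  simp_rw [Finset.mul_sum]
  exact Finset.sum_comm

private lemma sum_mul_right {m : ℕ} (v g : Fin m → ℝ) (x : ℝ) :
    (∑ a, v a * (g a * x)) = (∑ a, v a * g a) * x := by
  rw [Finset.sum_mul]
  exact Finset.sum_congr rfl fun a _ => by ring

private lemma sum_split {m : ℕ} (v f g p q : Fin m → ℝ) :
    (∑ a, v a * (f a + g a - p a - q a))
      = (∑ a, v a * f a) + (∑ a, v a * g a) - (∑ a, v a * p a) - (∑ a, v a * q a) := by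
  simp only [mul_add, mul_sub, Finset.sum_add_distrib, Finset.sum_sub_distrib]

private lemma sum_delta {m : ℕ} (e : Fin m) (x : Fin m → ℝ) :
    (∑ c, (if c = e then (1:ℝ) else 0) * x c) = x e := by
  simp [ite_mul]

private lemma factor_neg_sum {m : ℕ} (x : ℝ) (f : Fin m → ℝ) :
    (∑ d, -(x * f d)) = -(x * ∑ d, f d) := by
  rw [Finset.sum_neg_distrib, Finset.mul_sum]

private lemma factor_sum {m : ℕ} (x : ℝ) (f : Fin m → ℝ) :
    (∑ d, x * f d) = x * ∑ d, f d := (Finset.mul_sum _ _ _).symm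

/-- First-order junction conditions at a NULL point (n2 = 0): assuming the background
null junction conditions n^a[Y]_{ab} = 0 and P^{ab}[Y]_{ab} = 0, the linearized shell δτ
vanishes iff the three first-order null junction conditions hold. -/
theorem stmt_16
    (m : ℕ) (hm : 1 < m)
    (h P : Fin m → Fin m → ℝ) (l n : Fin m → ℝ) (l2 n2 : ℝ)
    (hsymm : ∀ a b, h a b = h b a)
    (Psymm : ∀ a b, P a b = P b a)
    (c1 : ∀ a b, (∑ c, P a c * h c b) + n a * l b = if a = b then (1 : ℝ) else 0)
    (c2 : ∀ a, (∑ b, P a b * l b) + l2 * n a = 0)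
    (c3 : (∑ a, n a * l a) + n2 * l2 = 1)
    (c4 : ∀ a, (∑ b, h a b * n b) + n2 * l a = 0)
    (hnull : n2 = 0)
    -- background jump [Y] satisfying the null junction conditions:
    (YB : Fin m → Fin m → ℝ) (YBsymm : ∀ a b, YB a b = YB b a)
    (hJ1 : ∀ b, (∑ a, n a * YB a b) = 0)
    (hJ2 : (∑ a, ∑ b, P a b * YB a b) = 0)
    -- perturbations of the inverse data and the jump [δY]:
    (δP : Fin m → Fin m → ℝ) (δPsymm : ∀ a b, δP a b = δP b a)
    (δn : Fin m → ℝ) (δn2 : ℝ)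
    (δY : Fin m → Fin m → ℝ) (δYsymm : ∀ a b, δY a b = δY b a) :
    let δτ : Fin m → Fin m → ℝ := fun a b =>
      -(n a * n b) * ((∑ c, ∑ d, δP c d * YB c d) + (∑ c, ∑ d, P c d * δY c d))
      + (∑ c, (n a * P b c + n b * P a c)
          * ((∑ d, δn d * YB c d) + (∑ d, n d * δY c d)))
      - (∑ c, ∑ d, P a c * P b d * (δn2 * YB c d + n2 * δY c d))
      - P a b * (-(n2) * ((∑ c, ∑ d, δP c d * YB c d) + (∑ c, ∑ d, P c d * δY c d))
          + (∑ c, ∑ d, n c * n d * δY c d))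
    (∀ a b, δτ a b = 0) ↔
      ((∀ a, (∑ b, (δn b * YB a b + n b * δY a b)) = 0) ∧
        ((∑ a, ∑ b, (δP a b * YB a b + P a b * δY a b)) = 0) ∧
        (∀ a b, δn2 * (∑ c, P a c * YB b c) = 0)) := by
  intro δτ
  subst hnull
  -- abbreviations
  let W : Fin m → ℝ := fun c => ∑ d, (δn d * YB c d + n d * δY c d)
  let S : ℝ := ∑ c, ∑ d, (δP c d * YB c d + P c d * δY c d)
  let T : ℝ := ∑ c, ∑ d, n c * n d * δY c d
  -- basic consequences of the compatibility relations at a null point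
  have f2 : (∑ a, n a * l a) = 1 := by simpa using c3
  have f2' : (∑ a, l a * n a) = 1 := by
    rw [← f2]; exact Finset.sum_congr rfl fun a _ => by ring
  have f3 : ∀ a, (∑ b, P a b * l b) = -(l2 * n a) := by
    intro a; have := c2 a; linarith
  have f4 : ∀ a, (∑ b, h a b * n b) = 0 := by
    intro a; have := c4 a; simpa using this
  have hlP : ∀ c, (∑ a, l a * P a c) = -(l2 * n c) := by
    intro c
    have e : (∑ a, l a * P a c) = ∑ a, P c a * l a :=
      Finset.sum_congr rfl fun a _ => by rw [Psymm]; ring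
    rw [e, f3]
  have hPh : ∀ c e, (∑ b, h e b * P b c) = (if c = e then (1:ℝ) else 0) - n c * l e := by
    intro c e
    have e1 : (∑ b, h e b * P b c) = ∑ b, P c b * h b e :=
      Finset.sum_congr rfl fun b _ => by rw [hsymm, Psymm]; ring
    have := c1 c e
    rw [e1]; linarith
  have hJ1' : ∀ c, (∑ d, YB c d * n d) = 0 := by
    intro c
    have e : (∑ d, YB c d * n d) = ∑ d, n d * YB d c :=
      Finset.sum_congr rfl fun d _ => by rw [YBsymm]; ring
    rw [e, hJ1]
  have hJ1'' : ∀ c, (∑ d, n d * YB c d) = 0 := by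
    intro c
    have e : (∑ d, n d * YB c d) = ∑ d, YB c d * n d :=
      Finset.sum_congr rfl fun d _ => by ring
    rw [e, hJ1']
  -- n contracted with W gives T
  have hnW : (∑ c, n c * W c) = T := by
    have e1 : (∑ c, n c * W c)
        = (∑ c, ∑ d, n c * (δn d * YB c d)) + ∑ c, ∑ d, n c * (n d * δY c d) := by
      simp only [W, Finset.mul_sum, mul_add, Finset.sum_add_distrib]
    have e2 : (∑ c, ∑ d, n c * (δn d * YB c d))
        = ∑ d, δn d * (∑ c, n c * YB c d) := by
      rw [Finset.sum_comm]
      refine Finset.sum_congr rfl fun d _ => ?_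
      rw [Finset.mul_sum]
      exact Finset.sum_congr rfl fun c _ => by ring
    have e3 : (∑ c, ∑ d, n c * (n d * δY c d)) = T := by
      refine Finset.sum_congr rfl fun c _ => Finset.sum_congr rfl fun d _ => by ring
    rw [e1, e2, e3]
    simp [hJ1]
  -- rewrite δτ in terms of S, W, T
  have hδτ : ∀ a b, δτ a b =
      -(n a * n b) * S + (∑ c, (n a * P b c + n b * P a c) * W c)
      - δn2 * (∑ c, ∑ d, P a c * P b d * YB c d) - P a b * T := by
    intro a b
    have hS : (∑ c, ∑ d, δP c d * YB c d) + (∑ c, ∑ d, P c d * δY c d) = S := by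
      simp only [S, Finset.sum_add_distrib]
    have hW : ∀ c, (∑ d, δn d * YB c d) + (∑ d, n d * δY c d) = W c := by
      intro c; simp only [W, Finset.sum_add_distrib]
    have h3 : (∑ c, ∑ d, P a c * P b d * (δn2 * YB c d + (0:ℝ) * δY c d))
        = δn2 * (∑ c, ∑ d, P a c * P b d * YB c d) := by
      rw [Finset.mul_sum]
      refine Finset.sum_congr rfl fun c _ => ?_
      rw [Finset.mul_sum]
      exact Finset.sum_congr rfl fun d _ => by ring
    simp only [δτ]
    rw [h3, hS]
    simp only [hW]
    have hT : (∑ c, ∑ d, n c * n d * δY c d) = T := rfl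
    rw [hT]
    ring
  constructor
  · -- forward direction
    intro Hz
    have H : ∀ a b,
        -(n a * n b) * S + (∑ c, (n a * P b c + n b * P a c) * W c)
        - δn2 * (∑ c, ∑ d, P a c * P b d * YB c d) - P a b * T = 0 := by
      intro a b; rw [← hδτ a b]; exact Hz a b
    -- contraction of δτ with l over the first index
    have hA : ∀ b, (∑ c, P b c * W c) = n b * S := by
      intro b
      have h0 : (∑ a, l a *
          (-(n a * n b) * S + (∑ c, (n a * P b c + n b * P a c) * W c)
            - δn2 * (∑ c, ∑ d, P a c * P b d * YB c d) - P a b * T)) = 0 := by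
        have e0 : ∀ a, l a *
            (-(n a * n b) * S + (∑ c, (n a * P b c + n b * P a c) * W c)
              - δn2 * (∑ c, ∑ d, P a c * P b d * YB c d) - P a b * T) = 0 :=
          fun a => by rw [H a b, mul_zero]
        rw [Finset.sum_congr rfl fun a _ => e0 a, Finset.sum_const_zero]
      rw [sum_split] at h0
      have p1 : (∑ a, l a * (-(n a * n b) * S)) = -(n b * S) := by
        have e : ∀ a, l a * (-(n a * n b) * S) = l a * (n a * (-(n b * S))) :=
          fun a => by ring
        rw [Finset.sum_congr rfl fun a _ => e a, sum_mul_right, f2']; ring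
      have p2 : (∑ a, l a * (∑ c, (n a * P b c + n b * P a c) * W c))
          = (∑ c, P b c * W c) - l2 * (n b * T) := by
        rw [swap_mul_sum]
        have e : ∀ c, (∑ a, l a * ((n a * P b c + n b * P a c) * W c))
            = P b c * W c - l2 * (n c * (n b * W c)) := by
          intro c
          have e1 : ∀ a, l a * ((n a * P b c + n b * P a c) * W c)
              = l a * (n a * (P b c * W c)) + l a * (P a c * (n b * W c)) :=
            fun a => by ring
          rw [Finset.sum_congr rfl fun a _ => e1 a, Finset.sum_add_distrib,
            sum_mul_right, sum_mul_right, f2', hlP]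
          ring
        rw [Finset.sum_congr rfl fun c _ => e c, Finset.sum_sub_distrib]
        have e2 : (∑ c, l2 * (n c * (n b * W c)))
            = l2 * (n b * (∑ c, n c * W c)) := by
          rw [factor_sum]
          congr 1
          have e3 : ∀ c, n c * (n b * W c) = n b * (n c * W c) := fun c => by ring
          rw [Finset.sum_congr rfl fun c _ => e3 c, factor_sum]
        rw [e2, hnW]
      have p3 : (∑ a, l a * (δn2 * (∑ c, ∑ d, P a c * P b d * YB c d))) = 0 := by
        have e1 : ∀ a, l a * (δn2 * (∑ c, ∑ d, P a c * P b d * YB c d))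
            = δn2 * (l a * (∑ c, ∑ d, P a c * P b d * YB c d)) := fun a => by ring
        rw [Finset.sum_congr rfl fun a _ => e1 a, factor_sum]
        have e2 : (∑ a, l a * (∑ c, ∑ d, P a c * P b d * YB c d)) = 0 := by
          rw [swap_mul_sum]
          have e3 : ∀ c, (∑ a, l a * (∑ d, P a c * P b d * YB c d))
              = -(l2 * (n c * (∑ d, P b d * YB c d))) := by
            intro c
            have e4 : ∀ a, l a * (∑ d, P a c * P b d * YB c d)
                = l a * (P a c * (∑ d, P b d * YB c d)) := by
              intro a
              congr 1
              have : ∀ d, P a c * P b d * YB c d = P a c * (P b d * YB c d) :=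
                fun d => by ring
              rw [Finset.sum_congr rfl fun d _ => this d, factor_sum]
            rw [Finset.sum_congr rfl fun a _ => e4 a, sum_mul_right, hlP]
            ring
          rw [Finset.sum_congr rfl fun c _ => e3 c]
          rw [factor_neg_sum]
          have e6 : (∑ c, n c * (∑ d, P b d * YB c d)) = 0 := by
            rw [swap_mul_sum]
            have e7 : ∀ d, (∑ c, n c * (P b d * YB c d))
                = P b d * (∑ c, n c * YB c d) := by
              intro d
              rw [Finset.mul_sum]
              exact Finset.sum_congr rfl fun c _ => by ring
            rw [Finset.sum_congr rfl fun d _ => e7 d]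
            simp [hJ1]
          rw [e6]; ring
        rw [e2]; ring
      have p4 : (∑ a, l a * (P a b * T)) = -(l2 * (n b * T)) := by
        rw [sum_mul_right, hlP]; ring
      rw [p1, p2, p3, p4] at h0
      linarith
    -- S in terms of T : contract hA with l
    have hSlT : S = -(l2 * T) := by
      have h0 : (∑ b, l b * (∑ c, P b c * W c)) = ∑ b, l b * (n b * S) := by
        exact Finset.sum_congr rfl fun b _ => by rw [hA]
      rw [swap_mul_sum] at h0
      have e1 : ∀ c, (∑ b, l b * (P b c * W c)) = -(l2 * (n c * W c)) := by
        intro c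
        rw [sum_mul_right, hlP]; ring
      rw [Finset.sum_congr rfl fun c _ => e1 c] at h0
      have e2 : (∑ c, -(l2 * (n c * W c))) = -(l2 * T) := by
        rw [factor_neg_sum, hnW]
      rw [e2, sum_mul_right, f2', one_mul] at h0
      exact h0.symm
    -- W in terms of T : contract hA with h
    have hW0 : ∀ e, W e = l e * T := by
      intro e
      have h0 : (∑ b, h e b * (∑ c, P b c * W c)) = ∑ b, h e b * (n b * S) := by
        exact Finset.sum_congr rfl fun b _ => by rw [hA]
      rw [swap_mul_sum, sum_mul_right, f4, zero_mul] at h0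
      have e1 : ∀ c, (∑ b, h e b * (P b c * W c))
          = ((if c = e then (1:ℝ) else 0) - n c * l e) * W c := by
        intro c
        rw [sum_mul_right, hPh]
      rw [Finset.sum_congr rfl fun c _ => e1 c] at h0
      have e2 : (∑ c, ((if c = e then (1:ℝ) else 0) - n c * l e) * W c)
          = W e - l e * T := by
        have : ∀ c, ((if c = e then (1:ℝ) else 0) - n c * l e) * W c
            = (if c = e then (1:ℝ) else 0) * W c - l e * (n c * W c) :=
          fun c => by ring
        rw [Finset.sum_congr rfl fun c _ => this c, Finset.sum_sub_distrib,
          sum_delta, factor_sum, hnW]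
      rw [e2] at h0
      linarith
    -- key relation: contracting δτ = 0 with h over the second index
    have EqD : ∀ a f, δn2 * (∑ c, P a c * YB c f)
        + ((if a = f then (1:ℝ) else 0) - n a * l f) * T = 0 := by
      intro a f
      have h0 : (∑ b, h f b *
          (-(n a * n b) * S + (∑ c, (n a * P b c + n b * P a c) * W c)
            - δn2 * (∑ c, ∑ d, P a c * P b d * YB c d) - P a b * T)) = 0 := by
        have e0 : ∀ b, h f b *
            (-(n a * n b) * S + (∑ c, (n a * P b c + n b * P a c) * W c)
              - δn2 * (∑ c, ∑ d, P a c * P b d * YB c d) - P a b * T) = 0 :=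
          fun b => by rw [H a b, mul_zero]
        rw [Finset.sum_congr rfl fun b _ => e0 b, Finset.sum_const_zero]
      rw [sum_split] at h0
      have p1 : (∑ b, h f b * (-(n a * n b) * S)) = 0 := by
        have e : ∀ b, h f b * (-(n a * n b) * S) = h f b * (n b * (-(n a * S))) :=
          fun b => by ring
        rw [Finset.sum_congr rfl fun b _ => e b, sum_mul_right, f4]; ring
      have p2 : (∑ b, h f b * (∑ c, (n a * P b c + n b * P a c) * W c))
          = n a * (W f - l f * T) := by
        rw [swap_mul_sum]
        have e : ∀ c, (∑ b, h f b * ((n a * P b c + n b * P a c) * W c))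
            = ((if c = f then (1:ℝ) else 0) - n c * l f) * (n a * W c) := by
          intro c
          have e1 : ∀ b, h f b * ((n a * P b c + n b * P a c) * W c)
              = h f b * (P b c * (n a * W c)) + h f b * (n b * (P a c * W c)) :=
            fun b => by ring
          rw [Finset.sum_congr rfl fun b _ => e1 b, Finset.sum_add_distrib,
            sum_mul_right, sum_mul_right, hPh, f4]
          ring
        rw [Finset.sum_congr rfl fun c _ => e c]
        have e2 : ∀ c, ((if c = f then (1:ℝ) else 0) - n c * l f) * (n a * W c)
            = (if c = f then (1:ℝ) else 0) * (n a * W c) - (l f * n a) * (n c * W c) :=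
          fun c => by ring
        rw [Finset.sum_congr rfl fun c _ => e2 c, Finset.sum_sub_distrib,
          sum_delta, factor_sum, hnW]
        ring
      have p3 : (∑ b, h f b * (δn2 * (∑ c, ∑ d, P a c * P b d * YB c d)))
          = δn2 * (∑ c, P a c * YB c f) := by
        have e1 : ∀ b, h f b * (δn2 * (∑ c, ∑ d, P a c * P b d * YB c d))
            = δn2 * (h f b * (∑ c, ∑ d, P a c * P b d * YB c d)) := fun b => by ring
        rw [Finset.sum_congr rfl fun b _ => e1 b, factor_sum]
        congr 1
        rw [swap_mul_sum]
        have e2 : ∀ c, (∑ b, h f b * (∑ d, P a c * P b d * YB c d))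
            = P a c * YB c f := by
          intro c
          have e3 : ∀ b, h f b * (∑ d, P a c * P b d * YB c d)
              = P a c * (h f b * (∑ d, P b d * YB c d)) := by
            intro b
            have : (∑ d, P a c * P b d * YB c d)
                = P a c * (∑ d, P b d * YB c d) := by
              rw [Finset.mul_sum]
              exact Finset.sum_congr rfl fun d _ => by ring
            rw [this]; ring
          rw [Finset.sum_congr rfl fun b _ => e3 b, factor_sum]
          have e4 : (∑ b, h f b * (∑ d, P b d * YB c d)) = YB c f := by
            rw [swap_mul_sum]
            have e5 : ∀ d, (∑ b, h f b * (P b d * YB c d))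
                = ((if d = f then (1:ℝ) else 0) - n d * l f) * YB c d := by
              intro d
              rw [sum_mul_right, hPh]
            rw [Finset.sum_congr rfl fun d _ => e5 d]
            have e6 : ∀ d, ((if d = f then (1:ℝ) else 0) - n d * l f) * YB c d
                = (if d = f then (1:ℝ) else 0) * YB c d - l f * (n d * YB c d) :=
              fun d => by ring
            rw [Finset.sum_congr rfl fun d _ => e6 d, Finset.sum_sub_distrib,
              sum_delta, factor_sum, hJ1'']
            ring
          rw [e4]
        exact Finset.sum_congr rfl fun c _ => e2 c
      have p4 : (∑ b, h f b * (P a b * T))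
          = ((if a = f then (1:ℝ) else 0) - n a * l f) * T := by
        have e1 : ∀ b, h f b * (P a b * T) = h f b * (P b a * T) :=
          fun b => by rw [Psymm a b]
        rw [Finset.sum_congr rfl fun b _ => e1 b, sum_mul_right, hPh]
      rw [p1, p2, p3, p4, hW0 f] at h0
      have : n a * (l f * T - l f * T) = 0 := by ring
      rw [this] at h0
      linarith
    -- contract EqD with h to get the pointwise relation (C)
    have hC : ∀ e f, δn2 * YB e f + h e f * T = 0 := by
      intro e f
      have h0 : (∑ a, h e a * (δn2 * (∑ c, P a c * YB c f)
          + ((if a = f then (1:ℝ) else 0) - n a * l f) * T)) = 0 := by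
        simp [EqD _ f]
      have e1 : ∀ a, h e a * (δn2 * (∑ c, P a c * YB c f)
            + ((if a = f then (1:ℝ) else 0) - n a * l f) * T)
          = δn2 * (h e a * (∑ c, P a c * YB c f))
            + (h e a * ((if a = f then (1:ℝ) else 0) * T) - h e a * (n a * (l f * T))) :=
        fun a => by ring
      rw [Finset.sum_congr rfl fun a _ => e1 a, Finset.sum_add_distrib,
        Finset.sum_sub_distrib] at h0
      have e2 : (∑ a, δn2 * (h e a * (∑ c, P a c * YB c f))) = δn2 * YB e f := by
        rw [factor_sum]
        congr 1
        rw [swap_mul_sum]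
        have e3 : ∀ c, (∑ a, h e a * (P a c * YB c f))
            = ((if c = e then (1:ℝ) else 0) - n c * l e) * YB c f := by
          intro c
          rw [sum_mul_right, hPh]
        rw [Finset.sum_congr rfl fun c _ => e3 c]
        have e4 : ∀ c, ((if c = e then (1:ℝ) else 0) - n c * l e) * YB c f
            = (if c = e then (1:ℝ) else 0) * YB c f - l e * (n c * YB c f) :=
          fun c => by ring
        rw [Finset.sum_congr rfl fun c _ => e4 c, Finset.sum_sub_distrib,
          sum_delta, factor_sum, hJ1]
        ring
      have e5 : (∑ a, h e a * ((if a = f then (1:ℝ) else 0) * T)) = h e f * T := by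
        have : ∀ a, h e a * ((if a = f then (1:ℝ) else 0) * T)
            = (if a = f then (1:ℝ) else 0) * (h e a * T) := fun a => by ring
        rw [Finset.sum_congr rfl fun a _ => this a, sum_delta]
      have e6 : (∑ a, h e a * (n a * (l f * T))) = 0 := by
        rw [sum_mul_right, f4]; ring
      rw [e2, e5, e6] at h0
      linarith
    -- trace of hC with P gives (m-1) * T = 0, hence T = 0
    have hTr : (∑ e, ∑ f, P e f * h e f) = (m : ℝ) - 1 := by
      have e1 : ∀ e, (∑ f, P e f * h e f) = 1 - n e * l e := by
        intro e
        have e2 : (∑ f, P e f * h e f) = ∑ f, P e f * h f e :=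
          Finset.sum_congr rfl fun f _ => by rw [hsymm]
        have := c1 e e
        rw [if_pos rfl] at this
        rw [e2]; linarith
      rw [Finset.sum_congr rfl fun e _ => e1 e, Finset.sum_sub_distrib, f2]
      simp
    have hT : T = 0 := by
      have h0 : (∑ e, ∑ f, P e f * (δn2 * YB e f + h e f * T)) = 0 := by
        simp [hC]
      have e1 : ∀ e, (∑ f, P e f * (δn2 * YB e f + h e f * T))
          = δn2 * (∑ f, P e f * YB e f) + (∑ f, P e f * h e f) * T := by
        intro e
        have : ∀ f, P e f * (δn2 * YB e f + h e f * T)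
            = δn2 * (P e f * YB e f) + (P e f * h e f) * T := fun f => by ring
        rw [Finset.sum_congr rfl fun f _ => this f, Finset.sum_add_distrib,
          factor_sum, Finset.sum_mul]
      rw [Finset.sum_congr rfl fun e _ => e1 e, Finset.sum_add_distrib] at h0
      have e2 : (∑ e, δn2 * (∑ f, P e f * YB e f)) = 0 := by
        rw [factor_sum, hJ2]; ring
      have e3 : (∑ e, (∑ f, P e f * h e f) * T)
          = ((m : ℝ) - 1) * T := by
        rw [← Finset.sum_mul, hTr]
      rw [e2, e3] at h0
      have hm1 : (m : ℝ) - 1 ≠ 0 := by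
        have : (1 : ℝ) < (m : ℝ) := by exact_mod_cast hm
        linarith
      have h1 : ((m : ℝ) - 1) * T = 0 := by linarith
      rcases mul_eq_zero.mp h1 with h' | h'
      · exact absurd h' hm1
      · exact h'
    -- conclude the three conditions
    refine ⟨?_, ?_, ?_⟩
    · intro a
      have : W a = 0 := by rw [hW0, hT]; ring
      simpa [W] using this
    · have : S = 0 := by rw [hSlT, hT]; ring
      simpa [S] using this
    · intro a b
      have h0 := EqD a b
      rw [hT, mul_zero, add_zero] at h0
      have e : (∑ c, P a c * YB b c) = ∑ c, P a c * YB c b :=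
        Finset.sum_congr rfl fun c _ => by rw [YBsymm]
      rw [e]; exact h0
  · -- reverse direction
    rintro ⟨hc1, hc2, hc3⟩ a b
    have hWz : ∀ c, W c = 0 := by
      intro c; simpa [W] using hc1 c
    have hSz : S = 0 := by simpa [S] using hc2
    have hTz : T = 0 := by rw [← hnW]; simp [hWz]
    have h3 : δn2 * (∑ c, ∑ d, P a c * P b d * YB c d) = 0 := by
      rw [Finset.mul_sum]
      have e : ∀ c, δn2 * (∑ d, P a c * P b d * YB c d)
          = P a c * (δn2 * (∑ d, P b d * YB c d)) := by
        intro c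
        have : (∑ d, P a c * P b d * YB c d) = P a c * (∑ d, P b d * YB c d) := by
          rw [Finset.mul_sum]
          exact Finset.sum_congr rfl fun d _ => by ring
        rw [this]; ring
      rw [Finset.sum_congr rfl fun c _ => e c]
      simp [hc3]
    rw [hδτ, hSz, hTz, h3]
    simp [hWz]
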